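/- If the n-dimensional extension h_cumulative of H, defined on products of probability measures via h(μ) = ∫₀¹ H(F_{μ₁}⁻¹(t),…,F_{μₙ}⁻¹(t)) dt, is convex, then H is submodular. Specifically: evaluating h_cumulative at the uniform mixture μᵢ = ½δ_{aᵢ} + ½δ_{bᵢ} of two Dirac measures gives h_cumulative(μ) = ½H(min(a,b)) + ½H(max(a,b)), so convexity of h_cumulative yields H(min(a,b)) + H(max(a,b)) ≤ H(a) + H(b) for all a, b ∈ X. -/

import Mathlib

open MeasureTheory

/-- The reversed cumulative distribution function `F_μ(x) = μ {y | y ≥ x}`. -/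
noncomputable def revCDF (μ : Measure ℝ) (x : ℝ) : ℝ := (μ {y | x ≤ y}).toReal

/-- Its "inverse" `F_μ⁻¹(t) = sup {x ∈ Xi | F_μ(x) ≥ t}`. -/
noncomputable def invRevCDF (Xi : Set ℝ) (μ : Measure ℝ) (t : ℝ) : ℝ :=
  sSup {x | x ∈ Xi ∧ t ≤ revCDF μ x}

/-- The extension `h_cumulative(μ) = ∫₀¹ H(F_{μ₁}⁻¹(t),…,F_{μₙ}⁻¹(t)) dt`. -/
noncomputable def hcum (n : ℕ) (X : Fin n → Set ℝ) (H : (Fin n → ℝ) → ℝ)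
    (μ : Fin n → Measure ℝ) : ℝ :=
  ∫ t in Set.Ioo (0 : ℝ) 1, H (fun i => invRevCDF (X i) (μ i) t)

lemma invRevCDF_eq' {Xi : Set ℝ} (hXc : IsCompact Xi) (μ : Measure ℝ) {c t : ℝ}
    (hc : c ∈ Xi) (hct : t ≤ revCDF μ c) (hub : ∀ x ∈ Xi, t ≤ revCDF μ x → x ≤ c) :
    invRevCDF Xi μ t = c := by
  unfold invRevCDF
  apply le_antisymm
  · exact csSup_le ⟨c, hc, hct⟩ (fun x hx => hub x hx.1 hx.2)
  · exact le_csSup (hXc.bddAbove.mono (fun x hx => hx.1)) ⟨hc, hct⟩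

lemma revCDF_dirac (c x : ℝ) : revCDF (Measure.dirac c) x = if x ≤ c then 1 else 0 := by
  unfold revCDF
  rw [show {y : ℝ | x ≤ y} = Set.Ici x from rfl,
    Measure.dirac_apply' _ measurableSet_Ici]
  by_cases h : x ≤ c <;> simp [Set.indicator, h]

lemma revCDF_mix (c d x : ℝ) :
    revCDF (ENNReal.ofReal (1/2 : ℝ) • Measure.dirac c
      + ENNReal.ofReal (1 - 1/2 : ℝ) • Measure.dirac d) x
      = (if x ≤ c then (1:ℝ)/2 else 0) + (if x ≤ d then (1:ℝ)/2 else 0) := by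
  unfold revCDF
  rw [show {y : ℝ | x ≤ y} = Set.Ici x from rfl]
  rw [Measure.add_apply, Measure.smul_apply, Measure.smul_apply, smul_eq_mul, smul_eq_mul,
    Measure.dirac_apply' _ measurableSet_Ici, Measure.dirac_apply' _ measurableSet_Ici]
  norm_num
  by_cases h1 : x ≤ c <;> by_cases h2 : x ≤ d <;>
    simp [Set.indicator, h1, h2, ENNReal.toReal_add, ENNReal.toReal_ofReal,
      ← ENNReal.ofReal_add] <;> norm_num

lemma invRevCDF_dirac {Xi : Set ℝ} (hXc : IsCompact Xi) {c : ℝ} (hc : c ∈ Xi)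
    {t : ℝ} (ht : 0 < t) (ht1 : t ≤ 1) :
    invRevCDF Xi (Measure.dirac c) t = c := by
  apply invRevCDF_eq' hXc _ hc
  · rw [revCDF_dirac]; simp [ht1]
  · intro x hx hxt
    rw [revCDF_dirac] at hxt
    by_contra h
    simp [le_of_not_ge, (not_le.mpr (not_le.mp h))] at hxt
    · linarith

lemma invRevCDF_mix_lo {Xi : Set ℝ} (hXc : IsCompact Xi) {c d : ℝ} (hc : c ∈ Xi) (hd : d ∈ Xi)
    {t : ℝ} (ht : 0 < t) (ht1 : t ≤ 1/2) :
    invRevCDF Xi (ENNReal.ofReal (1/2 : ℝ) • Measure.dirac c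
      + ENNReal.ofReal (1 - 1/2 : ℝ) • Measure.dirac d) t = max c d := by
  apply invRevCDF_eq' hXc _ (by rcases max_cases c d with ⟨h,_⟩|⟨h,_⟩ <;> rw [h] <;> assumption)
  · rw [revCDF_mix]
    rcases le_total c d with h | h
    · simp [max_eq_right h, le_refl]
      split <;> linarith
    · simp [max_eq_left h, le_refl]
      split <;> linarith
  · intro x hx hxt
    rw [revCDF_mix] at hxt
    by_contra hcon
    push_neg at hcon
    rw [max_lt_iff] at hcon
    simp [not_le.mpr hcon.1, not_le.mpr hcon.2] at hxt
    linarith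

lemma invRevCDF_mix_hi {Xi : Set ℝ} (hXc : IsCompact Xi) {c d : ℝ} (hc : c ∈ Xi) (hd : d ∈ Xi)
    {t : ℝ} (ht : 1/2 < t) (ht1 : t ≤ 1) :
    invRevCDF Xi (ENNReal.ofReal (1/2 : ℝ) • Measure.dirac c
      + ENNReal.ofReal (1 - 1/2 : ℝ) • Measure.dirac d) t = min c d := by
  apply invRevCDF_eq' hXc _ (by rcases min_cases c d with ⟨h,_⟩|⟨h,_⟩ <;> rw [h] <;> assumption)
  · rw [revCDF_mix]
    simp [min_le_left c d, min_le_right c d]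
    linarith
  · intro x hx hxt
    rw [revCDF_mix] at hxt
    by_contra hcon
    push_neg at hcon
    rw [min_lt_iff] at hcon
    have : ¬ (x ≤ c) ∨ ¬ (x ≤ d) := by
      rcases hcon with h | h
      · exact Or.inl (not_le.mpr h)
      · exact Or.inr (not_le.mpr h)
    rcases this with h | h <;> simp [h] at hxt <;> split at hxt <;> linarith

lemma hcum_dirac (n : ℕ) (X : Fin n → Set ℝ) (hX : ∀ i, IsCompact (X i))
    (H : (Fin n → ℝ) → ℝ) (a : Fin n → ℝ) (ha : ∀ i, a i ∈ X i) :
    hcum n X H (fun i => Measure.dirac (a i)) = H a := by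
  unfold hcum
  rw [setIntegral_congr_fun measurableSet_Ioo (g := fun _ => H a)
    (fun t ht => by
      simp only
      congr 1
      funext i
      exact invRevCDF_dirac (hX i) (ha i) ht.1 ht.2.le)]
  rw [setIntegral_const, Real.volume_real_Ioo]
  norm_num

lemma hcum_mix (n : ℕ) (X : Fin n → Set ℝ) (hX : ∀ i, IsCompact (X i))
    (H : (Fin n → ℝ) → ℝ) (a b : Fin n → ℝ) (ha : ∀ i, a i ∈ X i) (hb : ∀ i, b i ∈ X i) :
    hcum n X H (fun i => ENNReal.ofReal (1/2 : ℝ) • Measure.dirac (a i)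
      + ENNReal.ofReal (1 - 1/2 : ℝ) • Measure.dirac (b i))
      = (H (a ⊔ b) + H (a ⊓ b)) / 2 := by
  unfold hcum
  rw [setIntegral_congr_fun measurableSet_Ioo
    (g := fun t => if t ≤ 1/2 then H (a ⊔ b) else H (a ⊓ b))
    (fun t ht => by
      simp only
      by_cases h : t ≤ 1/2
      · rw [if_pos h]
        congr 1
        funext i
        rw [invRevCDF_mix_lo (hX i) (ha i) (hb i) ht.1 h]
        simp [Pi.sup_apply]
      · rw [if_neg h]
        congr 1
        funext i
        rw [invRevCDF_mix_hi (hX i) (ha i) (hb i) (not_le.mp h) ht.2.le]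
        simp [Pi.inf_apply])]
  rw [← Set.Ioc_union_Ioo_eq_Ioo (by norm_num : (0:ℝ) ≤ 1/2) (by norm_num : (1:ℝ)/2 < 1)]
  have hdisj : Disjoint (Set.Ioc (0:ℝ) (1/2)) (Set.Ioo (1/2:ℝ) 1) := by
    rw [Set.disjoint_left]
    intro x hx hx2
    exact absurd hx.2 (not_le.mpr hx2.1)
  rw [setIntegral_union hdisj measurableSet_Ioo
    ((integrableOn_congr_fun (fun t ht => if_pos ht.2) measurableSet_Ioc).mpr
      (integrableOn_const (by rw [Real.volume_Ioc]; exact ENNReal.ofReal_ne_top)))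
    ((integrableOn_congr_fun (fun t ht => if_neg (not_le.mpr ht.1)) measurableSet_Ioo).mpr
      (integrableOn_const (by rw [Real.volume_Ioo]; exact ENNReal.ofReal_ne_top)))]
  rw [setIntegral_congr_fun measurableSet_Ioc (g := fun _ => H (a ⊔ b))
      (fun t ht => if_pos ht.2),
    setIntegral_congr_fun measurableSet_Ioo (g := fun _ => H (a ⊓ b))
      (fun t ht => if_neg (not_le.mpr ht.1)),
    setIntegral_const, setIntegral_const, Real.volume_real_Ioc, Real.volume_real_Ioo]
  rw [max_eq_left (by norm_num), max_eq_left (by norm_num)]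
  simp only [smul_eq_mul]
  ring

/-- If the extension `h_cumulative` is convex on products of probability measures
supported in the compact sets `X i`, then `H` is submodular: evaluating at the
midpoint mixtures of Dirac measures yields
`H (a ⊓ b) + H (a ⊔ b) ≤ H a + H b` for all `a, b` in the product domain. -/
theorem convex_hcum_implies_submodular (n : ℕ) (X : Fin n → Set ℝ)
    (hX : ∀ i, IsCompact (X i)) (hXne : ∀ i, (X i).Nonempty)
    (H : (Fin n → ℝ) → ℝ) (hHc : ContinuousOn H (Set.pi Set.univ X))
    (hconv : ∀ μ ν : Fin n → Measure ℝ,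
      (∀ i, IsProbabilityMeasure (μ i)) → (∀ i, μ i (X i)ᶜ = 0) →
      (∀ i, IsProbabilityMeasure (ν i)) → (∀ i, ν i (X i)ᶜ = 0) →
      ∀ θ : ℝ, 0 ≤ θ → θ ≤ 1 →
        hcum n X H (fun i => ENNReal.ofReal θ • μ i + ENNReal.ofReal (1 - θ) • ν i) ≤
          θ * hcum n X H μ + (1 - θ) * hcum n X H ν) :
    ∀ a b : Fin n → ℝ, (∀ i, a i ∈ X i) → (∀ i, b i ∈ X i) →
      H (a ⊓ b) + H (a ⊔ b) ≤ H a + H b := by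
  intro a b ha hb
  have hnulla : ∀ i, Measure.dirac (a i) (X i)ᶜ = 0 := fun i => by
    rw [Measure.dirac_apply' _ (hX i).isClosed.measurableSet.compl]
    simp [ha i]
  have hnullb : ∀ i, Measure.dirac (b i) (X i)ᶜ = 0 := fun i => by
    rw [Measure.dirac_apply' _ (hX i).isClosed.measurableSet.compl]
    simp [hb i]
  have key := hconv (fun i => Measure.dirac (a i)) (fun i => Measure.dirac (b i))
    (fun i => Measure.dirac.isProbabilityMeasure) hnulla
    (fun i => Measure.dirac.isProbabilityMeasure) hnullb
    (1/2) (by norm_num) (by norm_num)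
  rw [hcum_mix n X hX H a b ha hb, hcum_dirac n X hX H a ha, hcum_dirac n X hX H b hb] at key
  linarith
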